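/- Let f be a nonzero function on a signed hypergraph Γ=(H,σ) and suppose a vertex x lies in two distinct weak nodal domains D and D′ of f. Then every vertex y sharing an edge with x lies in D ∪ D′; in particular the neighborhood S_1(x) = {y : y ∼ x} is contained in D ∪ D′. -/

import Mathlib

attribute [local instance] Classical.propDecidable

open Finset Matrix

/-! ## Signed hypergraphs (edges indexed by a type `E`; `sign v e ∈ {0, 1, -1}`,
nonzero exactly on incidences) -/

structure SignedHypergraph (V E : Type) where
  sign : V → E → ℝ
  sign_values : ∀ v e, sign v e = 0 ∨ sign v e = 1 ∨ sign v e = -1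

namespace SignedHypergraph

variable {V E : Type} [Fintype V] [Fintype E] [DecidableEq V] [DecidableEq E]

/-- The vertex set of an edge. -/
noncomputable def edgeVerts (G : SignedHypergraph V E) (e : E) : Finset V :=
  Finset.univ.filter fun v => G.sign v e ≠ 0

/-- The degree of a vertex. -/
noncomputable def deg (G : SignedHypergraph V E) (v : V) : ℕ :=
  (Finset.univ.filter fun e : E => G.sign v e ≠ 0).card

/-- The sign of an edge: `sgn e = (-1)^(|e|-1) ∏_{v ∈ e} σ(v,e)`. -/
noncomputable def edgeSign (G : SignedHypergraph V E) (e : E) : ℝ :=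
  (-1 : ℝ) ^ ((G.edgeVerts e).card - 1) * ∏ v ∈ G.edgeVerts e, G.sign v e

/-- The signed adjacency matrix. -/
noncomputable def adj (G : SignedHypergraph V E) : Matrix V V ℝ :=
  Matrix.of fun x y =>
    if x = y then 0
    else ∑ e ∈ Finset.univ.filter (fun e : E => G.sign x e ≠ 0 ∧ G.sign y e ≠ 0), G.edgeSign e

/-- The normalized Laplacian `L = I - D⁻¹ A`. -/
noncomputable def lap (G : SignedHypergraph V E) : Matrix V V ℝ :=
  Matrix.of fun x y => (if x = y then (1 : ℝ) else 0) - G.adj x y / (G.deg x : ℝ)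

/-- The degree-weighted inner product `⟨f, g⟩ = ∑ v deg(v) f(v) g(v)`. -/
noncomputable def dInner (G : SignedHypergraph V E) (f g : V → ℝ) : ℝ :=
  ∑ v : V, (G.deg v : ℝ) * f v * g v

/-- Two vertices share an edge. -/
def Adjacent (G : SignedHypergraph V E) (x y : V) : Prop :=
  ∃ e : E, G.sign x e ≠ 0 ∧ G.sign y e ≠ 0

/-- The underlying hypergraph is connected. -/
def Connected (G : SignedHypergraph V E) : Prop :=
  ∀ x y : V, Relation.ReflTransGen G.Adjacent x y

/-- One step of a strong nodal domain path: `x, y` in a common edge `e` with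
`f x · sgn e · f y > 0`. -/
def sStep (G : SignedHypergraph V E) (f : V → ℝ) (x y : V) : Prop :=
  ∃ e : E, G.sign x e ≠ 0 ∧ G.sign y e ≠ 0 ∧ 0 < f x * G.edgeSign e * f y

/-- The number `𝔖(f)` of strong nodal domains: equivalence classes of the support of `f`
under joining by S-paths. -/
noncomputable def strongDomainCount (G : SignedHypergraph V E) (f : V → ℝ) : ℕ :=
  Set.ncard {D : Set V | ∃ w, f w ≠ 0 ∧ D = {x | Relation.ReflTransGen (G.sStep f) w x}}

/-- A weak nodal domain path: a walk along edges such that any two consecutive nonzeros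
`v i`, `v j` of `f` (joined through zeros by the edges `e i, …, e (j-1)`) satisfy
`f (v i) · sgn (e i) ⋯ sgn (e (j-1)) · f (v j) > 0`. -/
def IsWPath (G : SignedHypergraph V E) (f : V → ℝ) {ℓ : ℕ}
    (v : Fin (ℓ + 1) → V) (e : Fin ℓ → E) : Prop :=
  (∀ t : Fin ℓ, G.sign (v t.castSucc) (e t) ≠ 0 ∧ G.sign (v t.succ) (e t) ≠ 0) ∧
  ∀ i j : Fin (ℓ + 1), i < j → f (v i) ≠ 0 → f (v j) ≠ 0 →
    (∀ k : Fin (ℓ + 1), i < k → k < j → f (v k) = 0) →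
    0 < f (v i) *
        (∏ t : Fin ℓ, if (i : ℕ) ≤ (t : ℕ) ∧ (t : ℕ) < (j : ℕ) then G.edgeSign (e t) else 1) *
        f (v j)

/-- `x` and `y` are joined by a W-path (or equal). -/
def wRel (G : SignedHypergraph V E) (f : V → ℝ) (x y : V) : Prop :=
  x = y ∨ ∃ (ℓ : ℕ) (v : Fin (ℓ + 1) → V) (e : Fin ℓ → E),
    G.IsWPath f v e ∧ v 0 = x ∧ v (Fin.last ℓ) = y

/-- The weak nodal domain of a vertex `w` in the support of `f`: the equivalence class
of `w` under the W-path relation on the support, enlarged by the zero vertices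
W-path-connected to it. -/
def weakDomain (G : SignedHypergraph V E) (f : V → ℝ) (w : V) : Set V :=
  {x | ∃ y, f y ≠ 0 ∧ G.wRel f w y ∧ G.wRel f x y}

def IsWeakNodalDomain (G : SignedHypergraph V E) (f : V → ℝ) (D : Set V) : Prop :=
  ∃ w, f w ≠ 0 ∧ D = G.weakDomain f w

/-- The number `𝔚(f)` of weak nodal domains. -/
noncomputable def weakDomainCount (G : SignedHypergraph V E) (f : V → ℝ) : ℕ :=
  Set.ncard {D : Set V | G.IsWeakNodalDomain f D}

/-- The number of connected components of the subhypergraph induced on the vertex set `A`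
with edges restricted to those satisfying `P`. -/
noncomputable def componentsOn (G : SignedHypergraph V E) (A : Finset V) (P : E → Prop) : ℕ :=
  Set.ncard {C : Set V | ∃ v ∈ A, C =
    {u | u ∈ A ∧ Relation.ReflTransGen
      (fun x y => x ∈ A ∧ y ∈ A ∧ ∃ e, P e ∧ G.sign x e ≠ 0 ∧ G.sign y e ≠ 0) v u}}

/-- The cyclomatic number `l = ∑_e (|e|-1) - |V| + c` of the subhypergraph induced on `A`
with edges restricted to those satisfying `P`. -/
noncomputable def cyclomaticOn (G : SignedHypergraph V E) (A : Finset V) (P : E → Prop) : ℤ :=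
  (∑ e ∈ Finset.univ.filter (fun e : E => P e ∧ (G.edgeVerts e ∩ A).Nonempty),
      (((G.edgeVerts e ∩ A).card : ℤ) - 1)) -
    (A.card : ℤ) + (G.componentsOn A P : ℤ)

/-- An edge all of whose pairs of (distinct) vertices `x, y` satisfy
`f x · sgn e · f y > 0`. -/
def posEdge (G : SignedHypergraph V E) (f : V → ℝ) (e : E) : Prop :=
  ∀ x y : V, G.sign x e ≠ 0 → G.sign y e ≠ 0 → x ≠ y → 0 < f x * G.edgeSign e * f y

/-- An edge of the subhypergraph `S` on the support of `f`. -/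
def sEdge (G : SignedHypergraph V E) (f : V → ℝ) (e : E) : Prop :=
  (∀ v, G.sign v e ≠ 0 → f v ≠ 0) ∧ G.posEdge f e

/-- The subhypergraph with edge set `P` contains a cycle. -/
def HasCycle (G : SignedHypergraph V E) (P : E → Prop) : Prop :=
  ∃ (q : ℕ) (v : Fin (q + 1) → V) (e : Fin q → E), 2 ≤ q ∧
    Function.Injective (fun t : Fin q => v t.castSucc) ∧ Function.Injective e ∧
    v (Fin.last q) = v 0 ∧
    ∀ t : Fin q, P (e t) ∧ G.sign (v t.castSucc) (e t) ≠ 0 ∧ G.sign (v t.succ) (e t) ≠ 0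

/-- A tree-like vertex: its removal increases the number of connected components
by `deg x - 1`. -/
def Treelike (G : SignedHypergraph V E) (x : V) : Prop :=
  (G.componentsOn (Finset.univ.erase x) (fun _ => True) : ℤ) =
    (G.componentsOn Finset.univ (fun _ => True) : ℤ) + (G.deg x : ℤ) - 1

/-- The Fiedler zero set of `f`: zeros `x` of `f` such that either all vertices sharing an
edge with `x` are zeros, or `x` is not tree-like. -/
def fiedlerSet (G : SignedHypergraph V E) (f : V → ℝ) : Set V :=
  {x | f x = 0 ∧ ((∀ y, G.Adjacent x y → f y = 0) ∨ ¬ G.Treelike x)}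

/-- Weak deletion of the vertices in `R`: each vertex of `R` is removed from every hyperedge
(possibly creating empty edges). -/
def weakDelete (G : SignedHypergraph V E) (R : Finset V) :
    SignedHypergraph {v : V // v ∉ R} E :=
  ⟨fun v e => G.sign v.1 e, fun v e => G.sign_values v.1 e⟩

end SignedHypergraph

/-! ## Plain hypergraphs -/

structure PlainHypergraph (V : Type) where
  verts : Finset V
  edges : Finset (Finset V)
  edge_subset : ∀ e ∈ edges, e ⊆ verts

namespace PlainHypergraph

variable {V : Type} [DecidableEq V]

def Adjacent (H : PlainHypergraph V) (x y : V) : Prop := ∃ e ∈ H.edges, x ∈ e ∧ y ∈ e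

def Connected (H : PlainHypergraph V) : Prop :=
  ∀ x ∈ H.verts, ∀ y ∈ H.verts, Relation.ReflTransGen H.Adjacent x y

/-- A cycle: an alternating closed sequence of distinct vertices and distinct edges
`v 0, e 0, v 1, e 1, …, v q = v 0` of length `q ≥ 2` with `v t, v (t+1) ∈ e t`. -/
def IsCycle (H : PlainHypergraph V) {q : ℕ} (v : Fin (q + 1) → V) (e : Fin q → Finset V) : Prop :=
  2 ≤ q ∧ Function.Injective (fun t : Fin q => v t.castSucc) ∧ Function.Injective e ∧
    v (Fin.last q) = v 0 ∧
    ∀ t : Fin q, e t ∈ H.edges ∧ v t.castSucc ∈ e t ∧ v t.succ ∈ e t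

def Acyclic (H : PlainHypergraph V) : Prop :=
  ¬ ∃ (q : ℕ) (v : Fin (q + 1) → V) (e : Fin q → Finset V), H.IsCycle v e

/-- The number of connected components. -/
noncomputable def ncomp (H : PlainHypergraph V) : ℕ :=
  Set.ncard {C : Set V | ∃ v ∈ H.verts, C = {u | Relation.ReflTransGen H.Adjacent v u}}

/-- The cyclomatic number `l(H) = ∑_e (|e|-1) - |V| + c(H)`. -/
noncomputable def cyclomatic (H : PlainHypergraph V) : ℤ :=
  (∑ e ∈ H.edges, ((e.card : ℤ) - 1)) - (H.verts.card : ℤ) + (H.ncomp : ℤ)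

def degree (H : PlainHypergraph V) (x : V) : ℕ := (H.edges.filter fun e => x ∈ e).card

/-- The subhypergraph induced by a vertex set `A`: edges `e ∩ A` for `e ∩ A ≠ ∅`. -/
def induced (H : PlainHypergraph V) (A : Finset V) : PlainHypergraph V where
  verts := H.verts ∩ A
  edges := (H.edges.filter fun e => (e ∩ A).Nonempty).image fun e => e ∩ A
  edge_subset := by
    intro e' he'
    simp only [Finset.mem_image, Finset.mem_filter] at he'
    obtain ⟨e, ⟨heE, -⟩, rfl⟩ := he'
    intro x hx
    rcases Finset.mem_inter.mp hx with ⟨hxe, hxA⟩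
    exact Finset.mem_inter.mpr ⟨H.edge_subset e heE hxe, hxA⟩

/-- A tree-like vertex: deleting it (induced subhypergraph on the remaining vertices)
increases the number of connected components by `deg x - 1`. -/
def Treelike (H : PlainHypergraph V) (x : V) : Prop :=
  ((H.induced (H.verts.erase x)).ncomp : ℤ) = (H.ncomp : ℤ) + (H.degree x : ℤ) - 1

/-- Removal of a vertex together with all edges incident to it. -/
def deleteVert (H : PlainHypergraph V) (y : V) : PlainHypergraph V where
  verts := H.verts.erase y
  edges := H.edges.filter fun e => y ∉ e
  edge_subset := by
    intro e he
    rcases Finset.mem_filter.mp he with ⟨heE, hy⟩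
    intro x hx
    exact Finset.mem_erase.mpr ⟨fun h => hy (h ▸ hx), H.edge_subset e heE hx⟩

/-- A spanning hyperforest of `H`: a maximal acyclic spanning subhypergraph. -/
def IsSpanningHyperforest (H T : PlainHypergraph V) : Prop :=
  T.verts = H.verts ∧ T.edges ⊆ H.edges ∧ T.Acyclic ∧
    ∀ T' : PlainHypergraph V, T'.verts = H.verts → T'.edges ⊆ H.edges → T'.Acyclic →
      T.edges ⊆ T'.edges → T'.edges = T.edges

end PlainHypergraph

/-- The positive index of inertia of a real matrix: the number of positive roots of its
characteristic polynomial, counted with multiplicity. -/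
noncomputable def posInertia {m : Type} [Fintype m] [DecidableEq m] (M : Matrix m m ℝ) : ℕ :=
  (M.charpoly.roots.filter fun x => 0 < x).card

/-- The bordered matrix `[[B, a], [aᵀ, b]]`. -/
def borderMatrix {n : ℕ} (B : Matrix (Fin n) (Fin n) ℝ) (a : Fin n → ℝ) (b : ℝ) :
    Matrix (Fin n ⊕ Unit) (Fin n ⊕ Unit) ℝ :=
  Matrix.fromBlocks B (Matrix.of fun i _ => a i) (Matrix.of fun _ j => a j)
    (Matrix.of fun _ _ => b)

namespace SignedHypergraph
set_option linter.unusedSectionVars false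

variable {V E : Type} [Fintype V] [Fintype E] [DecidableEq V] [DecidableEq E]
variable (G : SignedHypergraph V E) (f : V → ℝ)

lemma edgeSign_ne_zero (e : E) : G.edgeSign e ≠ 0 := by
  unfold edgeSign edgeVerts
  refine mul_ne_zero (pow_ne_zero _ (by norm_num)) ?_
  rw [Finset.prod_ne_zero_iff]
  intro v hv
  exact (Finset.mem_filter.mp hv).2

lemma isWPath_rev {ℓ : ℕ} {v : Fin (ℓ+1) → V} {e : Fin ℓ → E}
    (h : G.IsWPath f v e) : G.IsWPath f (fun i => v i.rev) (fun t => e t.rev) := by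
  obtain ⟨hstep, hpair⟩ := h
  constructor
  · intro t
    have h1 : (t.castSucc.rev : Fin (ℓ+1)) = (t.rev).succ := by
      ext
      simp only [Fin.val_rev, Fin.coe_castSucc, Fin.val_succ]
      omega
    have h2 : (t.succ.rev : Fin (ℓ+1)) = (t.rev).castSucc := by
      ext
      simp only [Fin.val_rev, Fin.coe_castSucc, Fin.val_succ]
      omega
    refine ⟨?_, ?_⟩
    · show G.sign (v t.castSucc.rev) (e t.rev) ≠ 0
      rw [h1]; exact (hstep t.rev).2
    · show G.sign (v t.succ.rev) (e t.rev) ≠ 0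
      rw [h2]; exact (hstep t.rev).1
  · intro i j hij hfi hfj hzero
    have hi := i.isLt; have hj := j.isLt
    have hij' : j.rev < i.rev := by
      simp only [Fin.lt_def, Fin.val_rev] at hij ⊢; omega
    have hzero' : ∀ k : Fin (ℓ+1), j.rev < k → k < i.rev → f (v k) = 0 := by
      intro k hk1 hk2
      have hk := k.isLt
      have := hzero k.rev (by simp only [Fin.lt_def, Fin.val_rev] at hk1 hk2 ⊢; omega)
        (by simp only [Fin.lt_def, Fin.val_rev] at hk1 hk2 ⊢; omega)
      simp only [Fin.rev_rev] at this
      exact this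
    have key := hpair j.rev i.rev hij' hfj hfi hzero'
    have hprod : (∏ t : Fin ℓ, if (i:ℕ) ≤ (t:ℕ) ∧ (t:ℕ) < (j:ℕ) then G.edgeSign (e t.rev) else 1)
        = ∏ t : Fin ℓ, if ((j.rev : Fin (ℓ+1)):ℕ) ≤ (t:ℕ) ∧ (t:ℕ) < ((i.rev : Fin (ℓ+1)):ℕ)
            then G.edgeSign (e t) else 1 := by
      rw [← Equiv.prod_comp Fin.revPerm
        (fun t : Fin ℓ => if ((j.rev : Fin (ℓ+1)):ℕ) ≤ (t:ℕ) ∧ (t:ℕ) < ((i.rev : Fin (ℓ+1)):ℕ)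
            then G.edgeSign (e t) else 1)]
      refine Finset.prod_congr rfl fun t _ => ?_
      have ht := t.isLt
      have hc : ((i:ℕ) ≤ (t:ℕ) ∧ (t:ℕ) < (j:ℕ)) ↔
          (((j.rev : Fin (ℓ+1)):ℕ) ≤ ((Fin.revPerm t : Fin ℓ):ℕ) ∧
            ((Fin.revPerm t : Fin ℓ):ℕ) < ((i.rev : Fin (ℓ+1)):ℕ)) := by
        simp only [Fin.revPerm_apply, Fin.val_rev]
        omega
      rw [if_congr hc rfl rfl, Fin.revPerm_apply]
    show 0 < f (v i.rev) * _ * f (v j.rev)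
    rw [hprod]
    have : f (v i.rev) *
        (∏ t : Fin ℓ, if ((j.rev : Fin (ℓ+1)):ℕ) ≤ (t:ℕ) ∧ (t:ℕ) < ((i.rev : Fin (ℓ+1)):ℕ)
          then G.edgeSign (e t) else 1) * f (v j.rev)
        = f (v j.rev) *
        (∏ t : Fin ℓ, if ((j.rev : Fin (ℓ+1)):ℕ) ≤ (t:ℕ) ∧ (t:ℕ) < ((i.rev : Fin (ℓ+1)):ℕ)
          then G.edgeSign (e t) else 1) * f (v i.rev) := by ring
    rw [this]
    exact key

lemma wRel_symm {x y : V} (h : G.wRel f x y) : G.wRel f y x := by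
  rcases h with rfl | ⟨ℓ, v, e, hp, h0, hl⟩
  · exact Or.inl rfl
  · refine Or.inr ⟨ℓ, fun i => v i.rev, fun t => e t.rev, G.isWPath_rev f hp, ?_, ?_⟩
    · show v (Fin.rev 0) = y
      rw [Fin.rev_zero]; exact hl
    · show v (Fin.last ℓ).rev = x
      rw [Fin.rev_last]; exact h0

def gluev {ℓ₁ ℓ₂ : ℕ} (v₁ : Fin (ℓ₁+1) → V) (v₂ : Fin (ℓ₂+1) → V) (i : Fin (ℓ₁+ℓ₂+1)) : V :=
  if h : (i:ℕ) ≤ ℓ₁ then v₁ ⟨i, by omega⟩ else v₂ ⟨(i:ℕ)-ℓ₁, by have := i.isLt; omega⟩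

def gluee {ℓ₁ ℓ₂ : ℕ} (e₁ : Fin ℓ₁ → E) (e₂ : Fin ℓ₂ → E) (t : Fin (ℓ₁+ℓ₂)) : E :=
  if h : (t:ℕ) < ℓ₁ then e₁ ⟨t, h⟩ else e₂ ⟨(t:ℕ)-ℓ₁, by have := t.isLt; omega⟩

lemma gluev_left {ℓ₁ ℓ₂ : ℕ} (v₁ : Fin (ℓ₁+1) → V) (v₂ : Fin (ℓ₂+1) → V)
    (i : Fin (ℓ₁+ℓ₂+1)) (h : (i:ℕ) ≤ ℓ₁) :
    gluev v₁ v₂ i = v₁ ⟨i, by omega⟩ := dif_pos h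

lemma gluev_right {ℓ₁ ℓ₂ : ℕ} {v₁ : Fin (ℓ₁+1) → V} {v₂ : Fin (ℓ₂+1) → V}
    (hglue : v₁ (Fin.last ℓ₁) = v₂ 0)
    (i : Fin (ℓ₁+ℓ₂+1)) (h : ℓ₁ ≤ (i:ℕ)) :
    gluev v₁ v₂ i = v₂ ⟨(i:ℕ)-ℓ₁, by have := i.isLt; omega⟩ := by
  by_cases h' : (i:ℕ) ≤ ℓ₁
  · have hi : (i:ℕ) = ℓ₁ := le_antisymm h' h
    rw [gluev_left v₁ v₂ i h']
    have e1 : (⟨(i:ℕ), by omega⟩ : Fin (ℓ₁+1)) = Fin.last ℓ₁ := by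
      ext; simp [hi]
    rw [e1, hglue]
    congr 1
    ext
    simp [hi]
  · exact dif_neg h'

lemma gluee_left {ℓ₁ ℓ₂ : ℕ} (e₁ : Fin ℓ₁ → E) (e₂ : Fin ℓ₂ → E)
    (t : Fin (ℓ₁+ℓ₂)) (h : (t:ℕ) < ℓ₁) :
    gluee e₁ e₂ t = e₁ ⟨t, h⟩ := dif_pos h

lemma gluee_right {ℓ₁ ℓ₂ : ℕ} (e₁ : Fin ℓ₁ → E) (e₂ : Fin ℓ₂ → E)
    (t : Fin (ℓ₁+ℓ₂)) (h : ¬ ((t:ℕ) < ℓ₁)) :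
    gluee e₁ e₂ t = e₂ ⟨(t:ℕ)-ℓ₁, by have := t.isLt; omega⟩ := dif_neg h

lemma gluev_zero {ℓ₁ ℓ₂ : ℕ} (v₁ : Fin (ℓ₁+1) → V) (v₂ : Fin (ℓ₂+1) → V) :
    gluev v₁ v₂ 0 = v₁ 0 := by
  rw [gluev_left v₁ v₂ 0 (by simp)]
  congr 1

lemma gluev_last {ℓ₁ ℓ₂ : ℕ} {v₁ : Fin (ℓ₁+1) → V} {v₂ : Fin (ℓ₂+1) → V}
    (hglue : v₁ (Fin.last ℓ₁) = v₂ 0) :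
    gluev v₁ v₂ (Fin.last (ℓ₁+ℓ₂)) = v₂ (Fin.last ℓ₂) := by
  rw [gluev_right hglue _ (by simp [Fin.last])]
  congr 1
  ext
  simp [Fin.last]

lemma isWPath_append {ℓ₁ ℓ₂ : ℕ} {v₁ : Fin (ℓ₁+1) → V} {e₁ : Fin ℓ₁ → E}
    {v₂ : Fin (ℓ₂+1) → V} {e₂ : Fin ℓ₂ → E}
    (h1 : G.IsWPath f v₁ e₁) (h2 : G.IsWPath f v₂ e₂)
    (hglue : v₁ (Fin.last ℓ₁) = v₂ 0)
    (hspan : ∀ (i : Fin (ℓ₁+1)) (j : Fin (ℓ₂+1)), f (v₁ i) ≠ 0 → f (v₂ j) ≠ 0 →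
      (∀ k : Fin (ℓ₁+1), i < k → f (v₁ k) = 0) → (∀ k : Fin (ℓ₂+1), k < j → f (v₂ k) = 0) →
      0 < f (v₁ i) * ((∏ t : Fin ℓ₁, if (i:ℕ) ≤ (t:ℕ) then G.edgeSign (e₁ t) else 1) *
          (∏ t : Fin ℓ₂, if (t:ℕ) < (j:ℕ) then G.edgeSign (e₂ t) else 1)) * f (v₂ j)) :
    G.IsWPath f (gluev v₁ v₂) (gluee e₁ e₂) := by
  constructor
  · intro t
    have ht2 := t.isLt
    by_cases ht : (t:ℕ) < ℓ₁
    · have hcs : gluev v₁ v₂ t.castSucc = v₁ ⟨(t:ℕ), by omega⟩ := by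
        rw [gluev_left _ _ _ (by simp only [Fin.coe_castSucc]; omega)]
        exact congrArg v₁ (Fin.ext (by simp))
      have hsc : gluev v₁ v₂ t.succ = v₁ ⟨(t:ℕ)+1, by omega⟩ := by
        rw [gluev_left _ _ _ (by simp only [Fin.val_succ]; omega)]
        exact congrArg v₁ (Fin.ext (by simp))
      rw [hcs, hsc, gluee_left _ _ _ ht]
      have := h1.1 ⟨(t:ℕ), ht⟩
      exact ⟨this.1, this.2⟩
    · have hℓ₂ : 0 < ℓ₂ := by omega
      have hcs : gluev v₁ v₂ t.castSucc = v₂ ⟨(t:ℕ)-ℓ₁, by omega⟩ := by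
        rw [gluev_right hglue _ (by simp only [Fin.coe_castSucc]; omega)]
        exact congrArg v₂ (Fin.ext (by simp))
      have hsc : gluev v₁ v₂ t.succ = v₂ ⟨(t:ℕ)-ℓ₁+1, by omega⟩ := by
        rw [gluev_right hglue _ (by simp only [Fin.val_succ]; omega)]
        congr 1
        ext
        simp [Fin.val_succ]
        omega
      rw [hcs, hsc, gluee_right _ _ _ ht]
      have := h2.1 ⟨(t:ℕ)-ℓ₁, by omega⟩
      exact ⟨this.1, this.2⟩
  · intro i j hij hfi hfj hzero
    have hi2 := i.isLt; have hj2 := j.isLt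
    have hijn : (i:ℕ) < (j:ℕ) := hij
    rcases le_or_gt (j:ℕ) ℓ₁ with hA | hA
    · -- both endpoints in v₁
      have hiℓ : (i:ℕ) ≤ ℓ₁ := by omega
      rw [gluev_left _ _ _ hiℓ] at hfi
      rw [gluev_left _ _ _ hA] at hfj
      have hz : ∀ k : Fin (ℓ₁+1), (⟨(i:ℕ), by omega⟩ : Fin (ℓ₁+1)) < k →
          k < ⟨(j:ℕ), by omega⟩ → f (v₁ k) = 0 := by
        intro k hk1 hk2
        have hk2' : (k:ℕ) < (j:ℕ) := hk2
        have := hzero ⟨(k:ℕ), by omega⟩ (by show (i:ℕ) < (k:ℕ); exact hk1) (by exact hk2')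
        rwa [gluev_left _ _ _ (by show (k:ℕ) ≤ ℓ₁; omega)] at this
      have key := h1.2 ⟨(i:ℕ), by omega⟩ ⟨(j:ℕ), by omega⟩ (by exact hijn) hfi hfj hz
      rw [gluev_left _ _ _ hiℓ, gluev_left _ _ _ hA]
      have hprod : (∏ t : Fin (ℓ₁+ℓ₂), if (i:ℕ) ≤ (t:ℕ) ∧ (t:ℕ) < (j:ℕ)
            then G.edgeSign (gluee e₁ e₂ t) else 1)
          = ∏ t : Fin ℓ₁, if (i:ℕ) ≤ (t:ℕ) ∧ (t:ℕ) < (j:ℕ) then G.edgeSign (e₁ t) else 1 := by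
        rw [Fin.prod_univ_add]
        have hb : (∏ t : Fin ℓ₂, if (i:ℕ) ≤ ((Fin.natAdd ℓ₁ t : Fin (ℓ₁+ℓ₂)):ℕ) ∧
              ((Fin.natAdd ℓ₁ t : Fin (ℓ₁+ℓ₂)):ℕ) < (j:ℕ)
            then G.edgeSign (gluee e₁ e₂ (Fin.natAdd ℓ₁ t)) else 1) = 1 := by
          refine Finset.prod_eq_one fun t _ => ?_
          rw [if_neg]
          simp only [Fin.coe_natAdd]
          omega
        rw [hb, mul_one]
        refine Finset.prod_congr rfl fun t _ => ?_
        have ht := t.isLt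
        rw [gluee_left e₁ e₂ (Fin.castAdd ℓ₂ t) (by simp only [Fin.coe_castAdd]; omega)]
        have : (⟨((Fin.castAdd ℓ₂ t : Fin (ℓ₁+ℓ₂)):ℕ), by simp only [Fin.coe_castAdd]; omega⟩ : Fin ℓ₁) = t := by
          ext; simp
        rw [this]
        rfl
      rw [hprod]
      exact key
    · rcases le_or_gt ℓ₁ (i:ℕ) with hB | hB
      · -- both endpoints in v₂
        rw [gluev_right hglue _ hB] at hfi
        rw [gluev_right hglue _ (by omega)] at hfj
        have hz : ∀ k : Fin (ℓ₂+1), (⟨(i:ℕ)-ℓ₁, by omega⟩ : Fin (ℓ₂+1)) < k →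
            k < ⟨(j:ℕ)-ℓ₁, by omega⟩ → f (v₂ k) = 0 := by
          intro k hk1 hk2
          have hk1' : (i:ℕ)-ℓ₁ < (k:ℕ) := hk1
          have hk2' : (k:ℕ) < (j:ℕ)-ℓ₁ := hk2
          have hk3 := k.isLt
          have := hzero ⟨ℓ₁+(k:ℕ), by omega⟩ (by show (i:ℕ) < ℓ₁+(k:ℕ); omega)
            (by show ℓ₁+(k:ℕ) < (j:ℕ); omega)
          rw [gluev_right hglue _ (by show ℓ₁ ≤ ℓ₁+(k:ℕ); omega)] at this
          have he : (⟨ℓ₁+(k:ℕ)-ℓ₁, by omega⟩ : Fin (ℓ₂+1)) = k := by ext; simp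
          rwa [he] at this
        have key := h2.2 ⟨(i:ℕ)-ℓ₁, by omega⟩ ⟨(j:ℕ)-ℓ₁, by omega⟩
          (by show (i:ℕ)-ℓ₁ < (j:ℕ)-ℓ₁; omega) hfi hfj hz
        rw [gluev_right hglue _ hB, gluev_right hglue _ (by omega)]
        have hprod : (∏ t : Fin (ℓ₁+ℓ₂), if (i:ℕ) ≤ (t:ℕ) ∧ (t:ℕ) < (j:ℕ)
              then G.edgeSign (gluee e₁ e₂ t) else 1)
            = ∏ t : Fin ℓ₂, if (i:ℕ)-ℓ₁ ≤ (t:ℕ) ∧ (t:ℕ) < (j:ℕ)-ℓ₁ then G.edgeSign (e₂ t) else 1 := by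
          rw [Fin.prod_univ_add]
          have ha : (∏ t : Fin ℓ₁, if (i:ℕ) ≤ ((Fin.castAdd ℓ₂ t : Fin (ℓ₁+ℓ₂)):ℕ) ∧
                ((Fin.castAdd ℓ₂ t : Fin (ℓ₁+ℓ₂)):ℕ) < (j:ℕ)
              then G.edgeSign (gluee e₁ e₂ (Fin.castAdd ℓ₂ t)) else 1) = 1 := by
            refine Finset.prod_eq_one fun t _ => ?_
            rw [if_neg]
            have ht := t.isLt
            simp only [Fin.coe_castAdd]
            omega
          rw [ha, one_mul]
          refine Finset.prod_congr rfl fun t _ => ?_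
          have ht := t.isLt
          rw [gluee_right e₁ e₂ (Fin.natAdd ℓ₁ t) (by simp [Fin.coe_natAdd])]
          have hcond : ((i:ℕ) ≤ ((Fin.natAdd ℓ₁ t : Fin (ℓ₁+ℓ₂)):ℕ) ∧
              ((Fin.natAdd ℓ₁ t : Fin (ℓ₁+ℓ₂)):ℕ) < (j:ℕ)) ↔
              ((i:ℕ)-ℓ₁ ≤ (t:ℕ) ∧ (t:ℕ) < (j:ℕ)-ℓ₁) := by
            simp only [Fin.coe_natAdd]
            omega
          rw [if_congr hcond rfl rfl]
          have he : (⟨((Fin.natAdd ℓ₁ t : Fin (ℓ₁+ℓ₂)):ℕ)-ℓ₁, by simp [Fin.coe_natAdd]⟩ : Fin ℓ₂) = t := by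
            ext; simp
          rw [he]
        rw [hprod]
        exact key
      · -- spanning pair : i < ℓ₁ < j
        rw [gluev_left _ _ _ (by omega)] at hfi
        rw [gluev_right hglue _ (by omega)] at hfj
        have hz1 : ∀ k : Fin (ℓ₁+1), (⟨(i:ℕ), by omega⟩ : Fin (ℓ₁+1)) < k → f (v₁ k) = 0 := by
          intro k hk1
          have hk1' : (i:ℕ) < (k:ℕ) := hk1
          have hk3 := k.isLt
          have := hzero ⟨(k:ℕ), by omega⟩ (by exact hk1') (by show (k:ℕ) < (j:ℕ); omega)
          rwa [gluev_left _ _ _ (by show (k:ℕ) ≤ ℓ₁; omega), Fin.eta] at this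
        have hz2 : ∀ k : Fin (ℓ₂+1), k < (⟨(j:ℕ)-ℓ₁, by omega⟩ : Fin (ℓ₂+1)) → f (v₂ k) = 0 := by
          intro k hk1
          have hk1' : (k:ℕ) < (j:ℕ)-ℓ₁ := hk1
          have hk3 := k.isLt
          have := hzero ⟨ℓ₁+(k:ℕ), by omega⟩ (by show (i:ℕ) < ℓ₁+(k:ℕ); omega)
            (by show ℓ₁+(k:ℕ) < (j:ℕ); omega)
          rw [gluev_right hglue _ (by show ℓ₁ ≤ ℓ₁+(k:ℕ); omega)] at this
          have he : (⟨ℓ₁+(k:ℕ)-ℓ₁, by omega⟩ : Fin (ℓ₂+1)) = k := by ext; simp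
          rwa [he] at this
        have key := hspan ⟨(i:ℕ), by omega⟩ ⟨(j:ℕ)-ℓ₁, by omega⟩ hfi hfj hz1 hz2
        rw [gluev_left _ _ _ (by omega), gluev_right hglue _ (by omega)]
        have hprod : (∏ t : Fin (ℓ₁+ℓ₂), if (i:ℕ) ≤ (t:ℕ) ∧ (t:ℕ) < (j:ℕ)
              then G.edgeSign (gluee e₁ e₂ t) else 1)
            = (∏ t : Fin ℓ₁, if (i:ℕ) ≤ (t:ℕ) then G.edgeSign (e₁ t) else 1) *
              (∏ t : Fin ℓ₂, if (t:ℕ) < (j:ℕ)-ℓ₁ then G.edgeSign (e₂ t) else 1) := by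
          rw [Fin.prod_univ_add]
          congr 1
          · refine Finset.prod_congr rfl fun t _ => ?_
            have ht := t.isLt
            rw [gluee_left e₁ e₂ (Fin.castAdd ℓ₂ t) (by simp only [Fin.coe_castAdd]; omega)]
            have hcond : ((i:ℕ) ≤ ((Fin.castAdd ℓ₂ t : Fin (ℓ₁+ℓ₂)):ℕ) ∧
                ((Fin.castAdd ℓ₂ t : Fin (ℓ₁+ℓ₂)):ℕ) < (j:ℕ)) ↔ ((i:ℕ) ≤ (t:ℕ)) := by
              simp only [Fin.coe_castAdd]
              omega
            rw [if_congr hcond rfl rfl]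
            have he : (⟨((Fin.castAdd ℓ₂ t : Fin (ℓ₁+ℓ₂)):ℕ), by simp only [Fin.coe_castAdd]; omega⟩ : Fin ℓ₁) = t := by
              ext; simp
            rw [he]
          · refine Finset.prod_congr rfl fun t _ => ?_
            have ht := t.isLt
            rw [gluee_right e₁ e₂ (Fin.natAdd ℓ₁ t) (by simp [Fin.coe_natAdd])]
            have hcond : ((i:ℕ) ≤ ((Fin.natAdd ℓ₁ t : Fin (ℓ₁+ℓ₂)):ℕ) ∧
                ((Fin.natAdd ℓ₁ t : Fin (ℓ₁+ℓ₂)):ℕ) < (j:ℕ)) ↔ ((t:ℕ) < (j:ℕ)-ℓ₁) := by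
              simp only [Fin.coe_natAdd]
              omega
            rw [if_congr hcond rfl rfl]
            have he : (⟨((Fin.natAdd ℓ₁ t : Fin (ℓ₁+ℓ₂)):ℕ)-ℓ₁, by simp [Fin.coe_natAdd]⟩ : Fin ℓ₂) = t := by
              ext; simp
            rw [he]
        rw [hprod]
        exact key

lemma wRel_trans_right {x m y : V} (hm : f m ≠ 0) (h1 : G.wRel f x m) (h2 : G.wRel f m y) :
    G.wRel f x y := by
  rcases h1 with rfl | ⟨ℓ₁, v₁, e₁, hp1, h10, h1l⟩
  · exact h2
  rcases h2 with rfl | ⟨ℓ₂, v₂, e₂, hp2, h20, h2l⟩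
  · exact Or.inr ⟨ℓ₁, v₁, e₁, hp1, h10, h1l⟩
  have hglue : v₁ (Fin.last ℓ₁) = v₂ 0 := by rw [h1l, h20]
  have hm1 : f (v₁ (Fin.last ℓ₁)) ≠ 0 := by rw [h1l]; exact hm
  have hm2 : f (v₂ 0) ≠ 0 := by rw [h20]; exact hm
  refine Or.inr ⟨ℓ₁+ℓ₂, gluev v₁ v₂, gluee e₁ e₂, G.isWPath_append f hp1 hp2 hglue ?_, ?_, ?_⟩
  · intro i j hfi hfj hz1 hz2
    have hi : i = Fin.last ℓ₁ := by
      by_contra hne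
      have : i < Fin.last ℓ₁ := lt_of_le_of_ne (Fin.le_last i) hne
      exact hm1 (hz1 (Fin.last ℓ₁) this)
    have hj : j = 0 := by
      by_contra hne
      have : (0 : Fin (ℓ₂+1)) < j := by
        simp only [Fin.lt_def, Fin.val_zero]
        have : (j:ℕ) ≠ 0 := fun h => hne (Fin.ext h)
        omega
      exact hm2 (hz2 0 this)
    subst hi hj
    have hp1' : (∏ t : Fin ℓ₁, if ((Fin.last ℓ₁ : Fin (ℓ₁+1)):ℕ) ≤ (t:ℕ)
        then G.edgeSign (e₁ t) else 1) = 1 := by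
      refine Finset.prod_eq_one fun t _ => ?_
      rw [if_neg]
      have := t.isLt
      simp only [Fin.val_last]
      omega
    have hp2' : (∏ t : Fin ℓ₂, if (t:ℕ) < ((0 : Fin (ℓ₂+1)):ℕ)
        then G.edgeSign (e₂ t) else 1) = 1 := by
      refine Finset.prod_eq_one fun t _ => ?_
      rw [if_neg]
      simp
    rw [hp1', hp2', mul_one, mul_one]
    rw [h1l, h20]
    exact mul_pos_iff.mpr (hm.lt_or_gt.elim (fun h => Or.inr ⟨h, h⟩) fun h => Or.inl ⟨h, h⟩)
  · rw [gluev_zero]; exact h10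
  · rw [gluev_last hglue]; exact h2l

lemma weakDomain_eq {a b : V} (ha : f a ≠ 0) (hb : f b ≠ 0) (hab : G.wRel f a b) :
    G.weakDomain f a = G.weakDomain f b := by
  ext u
  constructor
  · rintro ⟨m, hm, ham, hum⟩
    exact ⟨m, hm, G.wRel_trans_right f ha (G.wRel_symm f hab) ham, hum⟩
  · rintro ⟨m, hm, hbm, hum⟩
    exact ⟨m, hm, G.wRel_trans_right f hb hab hbm, hum⟩

lemma wRel_prepend {x y : V} (e₀ : E) (hfx : f x = 0)
    (hxe : G.sign x e₀ ≠ 0) (hye : G.sign y e₀ ≠ 0)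
    {ℓ : ℕ} {v : Fin (ℓ+1) → V} {e : Fin ℓ → E} (hp : G.IsWPath f v e)
    (h0 : v 0 = x)
    (hQ : ∀ j : Fin (ℓ+1), f (v j) ≠ 0 → (∀ k : Fin (ℓ+1), k < j → f (v k) = 0) →
      f y ≠ 0 → 0 < f y * (G.edgeSign e₀ *
        ∏ t : Fin ℓ, if (t:ℕ) < (j:ℕ) then G.edgeSign (e t) else 1) * f (v j)) :
    G.wRel f y (v (Fin.last ℓ)) := by
  have hp1 : G.IsWPath f (![y, x] : Fin 2 → V) (![e₀] : Fin 1 → E) := by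
    constructor
    · intro t
      have ht : t = 0 := Subsingleton.elim t 0
      subst ht
      exact ⟨hye, hxe⟩
    · intro i j hij hfi hfj hzero
      exfalso
      have hj1 : j = 1 := by
        have := j.isLt
        have := i.isLt
        have hij' : (i:ℕ) < (j:ℕ) := hij
        ext
        simp only [Fin.val_one]
        omega
      apply hfj
      rw [hj1]
      show f x = 0
      exact hfx
  have hglue : (![y, x] : Fin 2 → V) (Fin.last 1) = v 0 := by
    rw [h0]
    rfl
  have happ := G.isWPath_append f hp1 hp hglue ?_
  · refine Or.inr ⟨1+ℓ, gluev ![y, x] v, gluee ![e₀] e, happ, ?_, ?_⟩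
    · rw [gluev_zero]; rfl
    · rw [gluev_last hglue]
  · intro i j hfi hfj hz1 hz2
    have hi0 : i = 0 := by
      by_contra hne
      have hi1 : i = 1 := by
        have := i.isLt
        ext
        have : (i:ℕ) ≠ 0 := fun h => hne (Fin.ext h)
        simp only [Fin.val_one]
        omega
      apply hfi
      rw [hi1]
      exact hfx
    subst hi0
    have hfy : f y ≠ 0 := hfi
    have key := hQ j hfj hz2 hfy
    have hprod : (∏ t : Fin 1, if ((0 : Fin 2):ℕ) ≤ (t:ℕ)
        then G.edgeSign ((![e₀] : Fin 1 → E) t) else 1) = G.edgeSign e₀ := by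
      rw [Fin.prod_univ_one]
      rw [if_pos (by simp)]
      rfl
    rw [hprod]
    show 0 < f y * _ * f (v j)
    rw [← mul_assoc] at key ⊢
    exact key

lemma wRel_glue {x : V}
    {ℓ ℓ' : ℕ} {v : Fin (ℓ+1) → V} {e : Fin ℓ → E} {v' : Fin (ℓ'+1) → V} {e' : Fin ℓ' → E}
    (hp : G.IsWPath f v e) (hp' : G.IsWPath f v' e')
    (h0 : v 0 = x) (h0' : v' 0 = x)
    (hspan : ∀ (i : Fin (ℓ+1)) (j : Fin (ℓ'+1)), f (v i) ≠ 0 → f (v' j) ≠ 0 →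
      (∀ m : Fin (ℓ+1), m < i → f (v m) = 0) → (∀ m : Fin (ℓ'+1), m < j → f (v' m) = 0) →
      0 < f (v i) * ((∏ t : Fin ℓ, if (t:ℕ) < (i:ℕ) then G.edgeSign (e t) else 1) *
          (∏ t : Fin ℓ', if (t:ℕ) < (j:ℕ) then G.edgeSign (e' t) else 1)) * f (v' j)) :
    G.wRel f (v (Fin.last ℓ)) (v' (Fin.last ℓ')) := by
  have hrev := G.isWPath_rev f hp
  have hglue : (fun i => v (Fin.rev i)) (Fin.last ℓ) = v' 0 := by
    show v (Fin.last ℓ).rev = v' 0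
    rw [Fin.rev_last, h0, h0']
  have happ := G.isWPath_append f hrev hp' hglue ?_
  · refine Or.inr ⟨ℓ+ℓ', gluev _ v', gluee _ e', happ, ?_, ?_⟩
    · rw [gluev_zero]
      show v (Fin.rev 0) = _
      rw [Fin.rev_zero]
    · rw [gluev_last hglue]
  · intro i j hfi hfj hz1 hz2
    have hfi' : f (v i.rev) ≠ 0 := hfi
    have hz1' : ∀ m : Fin (ℓ+1), m < i.rev → f (v m) = 0 := by
      intro m hm
      have hmv := m.isLt
      have hiv := i.isLt
      have := hz1 m.rev (by simp only [Fin.lt_def, Fin.val_rev] at hm ⊢; omega)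
      simp only [Fin.rev_rev] at this
      exact this
    have key := hspan i.rev j hfi' hfj hz1' hz2
    have hprod : (∏ t : Fin ℓ, if (i:ℕ) ≤ (t:ℕ)
          then G.edgeSign ((fun t => e (Fin.rev t)) t) else 1)
        = ∏ t : Fin ℓ, if (t:ℕ) < ((i.rev : Fin (ℓ+1)):ℕ) then G.edgeSign (e t) else 1 := by
      rw [← Equiv.prod_comp Fin.revPerm
        (fun t : Fin ℓ => if (t:ℕ) < ((i.rev : Fin (ℓ+1)):ℕ) then G.edgeSign (e t) else 1)]
      refine Finset.prod_congr rfl fun t _ => ?_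
      have ht := t.isLt
      have hiv := i.isLt
      have hc : ((i:ℕ) ≤ (t:ℕ)) ↔
          (((Fin.revPerm t : Fin ℓ):ℕ) < ((i.rev : Fin (ℓ+1)):ℕ)) := by
        simp only [Fin.revPerm_apply, Fin.val_rev]
        omega
      rw [if_congr hc rfl rfl, Fin.revPerm_apply]
    show 0 < f (v i.rev) * _ * f (v' j)
    rw [hprod]
    exact key

end SignedHypergraph

variable {V E : Type} [Fintype V] [Fintype E] [DecidableEq V] [DecidableEq E]

theorem stmt5 (G : SignedHypergraph V E) (f : V → ℝ) (hf : f ≠ 0) (D D' : Set V)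
    (hD : G.IsWeakNodalDomain f D) (hD' : G.IsWeakNodalDomain f D') (hne : D ≠ D')
    (x : V) (hx : x ∈ D) (hx' : x ∈ D') :
    ∀ y : V, G.Adjacent x y → y ∈ D ∪ D' := by
  intro y hy
  obtain ⟨e₀, hxe, hye⟩ := hy
  obtain ⟨w, hw, rfl⟩ := hD
  obtain ⟨w', hw', rfl⟩ := hD'
  obtain ⟨z, hz, hwz, hxz⟩ := hx
  obtain ⟨z', hz', hwz', hxz'⟩ := hx'
  have hDz : G.weakDomain f w = G.weakDomain f z := G.weakDomain_eq f hw hz hwz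
  have hDz' : G.weakDomain f w' = G.weakDomain f z' := G.weakDomain_eq f hw' hz' hwz'
  have hfx : f x = 0 := by
    by_contra hfx
    apply hne
    rw [hDz, hDz']
    exact G.weakDomain_eq f hz hz'
      (G.wRel_trans_right f hfx (G.wRel_symm f hxz) hxz')
  rcases hxz with hxz_eq | ⟨ℓ, v, e, hp, h0, hl⟩
  · rw [hxz_eq] at hfx; exact absurd hfx hz
  rcases hxz' with hxz'_eq | ⟨ℓ', v', e', hp', h0', hl'⟩
  · rw [hxz'_eq] at hfx; exact absurd hfx hz'
  have hminex : ∀ {n : ℕ} (u : Fin (n+1) → V), f (u (Fin.last n)) ≠ 0 →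
      ∃ k : Fin (n+1), f (u k) ≠ 0 ∧ ∀ m : Fin (n+1), m < k → f (u m) = 0 := by
    intro n u hu
    let S : Finset (Fin (n+1)) := Finset.univ.filter fun i => f (u i) ≠ 0
    have hS : S.Nonempty := ⟨Fin.last n, by simp [S, hu]⟩
    refine ⟨S.min' hS, ?_, ?_⟩
    · have := S.min'_mem hS
      simp only [S, Finset.mem_filter] at this
      exact this.2
    · intro m hm
      by_contra hm0
      exact absurd hm (not_lt.mpr (S.min'_le m (by simp [S, hm0])))
  have huniq : ∀ {n : ℕ} (u : Fin (n+1) → V) (k j : Fin (n+1)),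
      f (u k) ≠ 0 → (∀ m, m < k → f (u m) = 0) →
      f (u j) ≠ 0 → (∀ m, m < j → f (u m) = 0) → j = k := by
    intro n u k j hk hkm hj hjm
    rcases lt_trichotomy j k with h | h | h
    · exact absurd (hkm j h) hj
    · exact h
    · exact absurd (hjm k h) hk
  obtain ⟨k, hk, hkmin⟩ := hminex v (hl ▸ hz)
  obtain ⟨k', hk', hkmin'⟩ := hminex v' (hl' ▸ hz')
  by_cases hfy : f y = 0
  · refine Set.mem_union_left _ ⟨z, hz, hwz, ?_⟩
    have := G.wRel_prepend f e₀ hfx hxe hye hp h0 ?_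
    · rwa [hl] at this
    · intro j hfj hzj hfy'
      exact absurd hfy hfy'
  · set A : ℝ := ∏ t : Fin ℓ, if (t:ℕ) < (k:ℕ) then G.edgeSign (e t) else 1 with hA
    set A' : ℝ := ∏ t : Fin ℓ', if (t:ℕ) < (k':ℕ) then G.edgeSign (e' t) else 1 with hA'
    have hAne : A ≠ 0 := by
      rw [hA]
      refine Finset.prod_ne_zero_iff.mpr fun t _ => ?_
      split
      · exact G.edgeSign_ne_zero (e t)
      · exact one_ne_zero
    have hA'ne : A' ≠ 0 := by
      rw [hA']
      refine Finset.prod_ne_zero_iff.mpr fun t _ => ?_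
      split
      · exact G.edgeSign_ne_zero (e' t)
      · exact one_ne_zero
    have hQne : f y * (G.edgeSign e₀ * A) * f (v k) ≠ 0 :=
      mul_ne_zero (mul_ne_zero hfy (mul_ne_zero (G.edgeSign_ne_zero e₀) hAne)) hk
    have hQ'ne : f y * (G.edgeSign e₀ * A') * f (v' k') ≠ 0 :=
      mul_ne_zero (mul_ne_zero hfy (mul_ne_zero (G.edgeSign_ne_zero e₀) hA'ne)) hk'
    rcases hQne.lt_or_gt with hQneg | hQpos
    · rcases hQ'ne.lt_or_gt with hQ'neg | hQ'pos
      · exfalso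
        apply hne
        rw [hDz, hDz']
        refine G.weakDomain_eq f hz hz' ?_
        have := G.wRel_glue f hp hp' h0 h0' ?_
        · rwa [hl, hl'] at this
        · intro i j hfi hfj hzi hzj
          have hik : i = k := huniq v k i hk hkmin hfi hzi
          have hjk : j = k' := huniq v' k' j hk' hkmin' hfj hzj
          subst hik hjk
          rw [← hA, ← hA']
          nlinarith [mul_pos_of_neg_of_neg hQneg hQ'neg, sq_nonneg (f y * G.edgeSign e₀),
            sq_abs (f y * G.edgeSign e₀)]
      · refine Set.mem_union_right _ ⟨z', hz', hwz', ?_⟩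
        have := G.wRel_prepend f e₀ hfx hxe hye hp' h0' ?_
        · rwa [hl'] at this
        · intro j hfj hzj _
          have hjk : j = k' := huniq v' k' j hk' hkmin' hfj hzj
          subst hjk
          rw [← hA']
          exact hQ'pos
    · refine Set.mem_union_left _ ⟨z, hz, hwz, ?_⟩
      have := G.wRel_prepend f e₀ hfx hxe hye hp h0 ?_
      · rwa [hl] at this
      · intro j hfj hzj _
        have hjk : j = k := huniq v k j hk hkmin hfj hzj
        subst hjk
        rw [← hA]
        exact hQpos
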